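/- Let $s\in(1/2,1)$ and let $b:(0,\infty)\to(1/2,1)$ be a continuous function with $\lim_{\alpha\to\infty} b(\alpha) = s$. Suppose there exist constants $C\ge 1$ and $L>0$ such that for all $\alpha\in(L,\infty)$ the integral $\int_{\alpha}^{\infty} t^{1/(2b(t)-2)}\,dt$ is finite and positive and $\frac1C \le \frac{s-b(\alpha)}{\int_{\alpha}^{\infty} t^{1/(2b(t)-2)}\,dt} \le C$. Then for every real $x$ with $x < \frac{1}{2-2s} - 1$ one has $\lim_{\alpha\to\infty} (s-b(\alpha))\,\alpha^{x} = 0$. -/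

import Mathlib

open Filter MeasureTheory Set Real

theorem spectrum_gap_decay_below_critical_exponent (s : ℝ) (hs : s ∈ Ioo (1/2 : ℝ) 1)
    (b : ℝ → ℝ)
    (hb : ∀ t : ℝ, 0 < t → b t ∈ Ioo (1/2 : ℝ) 1)
    (hbc : ContinuousOn b (Ioi 0))
    (hbs : Tendsto b atTop (nhds s))
    (C : ℝ) (hC : 1 ≤ C) (L : ℝ) (hL : 0 < L)
    (hcomp : ∀ α ∈ Ioi L,
      (∫⁻ t in Ioi α, ENNReal.ofReal (t ^ (1 / (2 * b t - 2)))) ≠ ⊤ ∧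
      0 < (∫⁻ t in Ioi α, ENNReal.ofReal (t ^ (1 / (2 * b t - 2)))) ∧
      1 / C ≤ (s - b α) / (∫⁻ t in Ioi α, ENNReal.ofReal (t ^ (1 / (2 * b t - 2)))).toReal ∧
      (s - b α) / (∫⁻ t in Ioi α, ENNReal.ofReal (t ^ (1 / (2 * b t - 2)))).toReal ≤ C)
    (x : ℝ) (hx : x < 1 / (2 - 2 * s) - 1) :
    Tendsto (fun α : ℝ => (s - b α) * α ^ x) atTop (nhds 0) := by
  obtain ⟨hs1, hs2⟩ := hs
  set q : ℝ := 2 * s - 2 with hqdef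
  have hq0 : q < 0 := by simp [hqdef]; linarith
  have hq1 : -1 < q := by simp [hqdef]; linarith
  -- 1/q < -1
  have hqinv : 1 / q < -1 := by
    rw [div_lt_iff_of_neg hq0]; linarith
  -- 1/q < -x - 1
  have hqx : 1 / q < -x - 1 := by
    have hne : (2 : ℝ) - 2 * s ≠ 0 := by linarith
    have hqne : q ≠ 0 := ne_of_lt hq0
    have : 1 / (2 - 2 * s) = -(1 / q) := by
      rw [hqdef]; field_simp
      rw [← neg_sub s 1, neg_div, neg_neg, div_self (sub_ne_zero.mpr (ne_of_lt hs2))]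
    rw [this] at hx; linarith
  set p : ℝ := (1 / q + min (-1) (-x - 1)) / 2 with hpdef
  have hmin : 1 / q < min (-1) (-x - 1) := lt_min hqinv hqx
  have hpq : 1 / q < p := by rw [hpdef]; linarith
  have hp1 : p < -1 := by
    have h1 := min_le_left (-1 : ℝ) (-x - 1)
    rw [hpdef]; linarith [min_le_left (-1 : ℝ) (-x - 1)]
  have hpx : p + 1 + x < 0 := by
    have := min_le_right (-1 : ℝ) (-x - 1)
    have : p < -x - 1 := by rw [hpdef]; linarith
    linarith
  have hp0 : p < 0 := by linarith
  -- 1/p < q, hence 1 + 1/(2p) < s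
  have hpinv : 1 / p < q := by
    rw [div_lt_iff_of_neg hp0]
    rw [div_lt_iff_of_neg hq0] at hpq
    linarith [hpq, mul_comm p q]
  have hps : 1 + 1 / (2 * p) < s := by
    have heq : 1 / (2 * p) = (1 / p) / 2 := by rw [one_div, one_div, mul_inv]; ring
    have : 1 / (2 * p) < q / 2 := by rw [heq]; linarith
    simp only [hqdef] at this; linarith
  clear_value q p
  have hev : ∀ᶠ t in atTop, 1 + 1 / (2 * p) < b t := hbs.eventually (eventually_gt_nhds hps)
  obtain ⟨M, hM⟩ := eventually_atTop.mp hev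
  set M' : ℝ := max M (max L 1) + 1 with hM'def
  have key : ∀ α : ℝ, M' ≤ α →
      0 ≤ (s - b α) * α ^ x ∧ (s - b α) * α ^ x ≤ (C / (-(p + 1))) * α ^ (p + 1 + x) := by
    intro α hα
    have hMm : M ≤ M' - 1 := by rw [hM'def]; simp [le_max_left]
    have hLm : L ≤ M' - 1 := by
      rw [hM'def]; simp only [add_sub_cancel_right]
      exact le_trans (le_max_left L 1) (le_max_right M (max L 1))
    have h1m : (1 : ℝ) ≤ M' - 1 := by
      rw [hM'def]; simp only [add_sub_cancel_right]
      exact le_trans (le_max_right L 1) (le_max_right M (max L 1))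
    have hα1 : (1 : ℝ) ≤ α := by linarith
    have hα0 : (0 : ℝ) < α := by linarith
    have hαL : α ∈ Ioi L := by simp only [mem_Ioi]; linarith
    obtain ⟨hfin, hpos, hlo, hhi⟩ := hcomp α hαL
    set I := (∫⁻ t in Ioi α, ENNReal.ofReal (t ^ (1 / (2 * b t - 2)))) with hIdef
    have hIreal : 0 < I.toReal := ENNReal.toReal_pos hpos.ne' hfin
    have hCpos : (0 : ℝ) < C := by linarith
    -- comparison: I ≤ ∫⁻ t^p
    have hmono : I ≤ ∫⁻ t in Ioi α, ENNReal.ofReal (t ^ p) := by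
      apply setLIntegral_mono' measurableSet_Ioi
      intro t ht
      apply ENNReal.ofReal_le_ofReal
      have ht1 : 1 ≤ t := le_trans hα1 (le_of_lt ht)
      have htpos : 0 < t := lt_of_lt_of_le zero_lt_one ht1
      apply Real.rpow_le_rpow_of_exponent_le ht1
      have hbt := hb t htpos
      have hbt2 : 2 * b t - 2 < 0 := by have := hbt.2; linarith
      have hbtM : 1 + 1 / (2 * p) < b t := by
        apply hM t; linarith [le_of_lt (mem_Ioi.mp ht)]
      have h1 : 1 / p < 2 * b t - 2 := by
        have h2 : 1 / (2 * p) < b t - 1 := by linarith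
        have heq2 : 1 / (2 * p) = (1 / p) / 2 := by rw [one_div, one_div, mul_inv]; ring
        rw [heq2] at h2; linarith
      rw [div_le_iff_of_neg hbt2]
      rw [div_lt_iff_of_neg hp0] at h1
      linarith [mul_comm p (2 * b t - 2), h1]
    -- value of bound integral
    have hint : IntegrableOn (fun t : ℝ => t ^ p) (Ioi α) := integrableOn_Ioi_rpow_of_lt hp1 hα0
    have hnn : 0 ≤ -α ^ (p + 1) / (p + 1) := by
      have hA : (0 : ℝ) < α ^ (p + 1) := Real.rpow_pos_of_pos hα0 _
      rw [div_nonneg_iff]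
      right
      constructor <;> linarith
    have hval : (∫⁻ t in Ioi α, ENNReal.ofReal (t ^ p)) = ENNReal.ofReal (-α ^ (p + 1) / (p + 1)) := by
      rw [← ofReal_integral_eq_lintegral_ofReal hint ?_, integral_Ioi_rpow_of_lt hp1 hα0]
      filter_upwards [ae_restrict_mem measurableSet_Ioi] with t ht
      exact Real.rpow_nonneg (le_of_lt (lt_trans hα0 ht)) p
    have hIle : I.toReal ≤ -α ^ (p + 1) / (p + 1) := by
      have h2 := ENNReal.toReal_mono ENNReal.ofReal_ne_top (hmono.trans_eq hval)
      rwa [ENNReal.toReal_ofReal hnn] at h2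
    -- bounds on s - b α
    have hup : s - b α ≤ C * I.toReal := (div_le_iff₀ hIreal).mp hhi
    have hlo2 : 1 / C * I.toReal ≤ s - b α := (le_div_iff₀ hIreal).mp hlo
    have hsb0 : 0 ≤ s - b α := by
      have : 0 < 1 / C * I.toReal := by positivity
      linarith
    have hxnn : 0 ≤ α ^ x := Real.rpow_nonneg hα0.le x
    constructor
    · exact mul_nonneg hsb0 hxnn
    · have hαadd : α ^ (p + 1 + x) = α ^ (p + 1) * α ^ x := Real.rpow_add hα0 _ _
      calc (s - b α) * α ^ x ≤ (C * (-α ^ (p + 1) / (p + 1))) * α ^ x := by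
            apply mul_le_mul_of_nonneg_right _ hxnn
            exact le_trans hup (mul_le_mul_of_nonneg_left hIle hCpos.le)
        _ = (C / (-(p + 1))) * α ^ (p + 1 + x) := by
            rw [hαadd, neg_div, div_neg]
            ring
  have hK : Tendsto (fun α : ℝ => (C / (-(p + 1))) * α ^ (p + 1 + x)) atTop (nhds 0) := by
    have h0 := (tendsto_rpow_neg_atTop (by linarith : (0 : ℝ) < -(p + 1 + x))).const_mul
      (C / (-(p + 1)))
    simpa [neg_neg] using h0
  apply squeeze_zero' ?_ ?_ hK
  · filter_upwards [eventually_ge_atTop M'] with α hα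
    exact (key α hα).1
  · filter_upwards [eventually_ge_atTop M'] with α hα
    exact (key α hα).2
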